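/- arXiv:2503.14420 — 7 statements merged into one kernel-verified Lean document; each statement's English description precedes it below -/
import Mathlib

section
/- Let r > 1 be an integer, let f ∈ ℚ[x₁,…,x_r] be a nonzero polynomial, let S⁺, S⁻ ⊆ {1,…,r} be disjoint subsets, let T ⊆ {1,…,r}, and for each i ∈ T let (m_i, a_i) be a pair of integers with m_i > 1 and 0 ≤ a_i < m_i. Suppose there exists an index i₀ ∈ {1,…,r} such that either i₀ ∉ T, or i₀ ∈ T and gcd(a_{i₀}, m_{i₀}) = 1 (i.e. a_{i₀} is a unit modulo m_{i₀}). Then the set of tuples (n₁,…,n_r) ∈ ℤ^r satisfying: (1) f(n₁,…,n_r) ≠ 0 and ∏_{i=1}^r n_i ≠ 0; (2) n_i ≡ a_i (mod m_i) for all i ∈ T; (3) n_i > 0 for all i ∈ S⁺ and n_i < 0 for all i ∈ S⁻; and (4) n₁,…,n_r generate the unit ideal of ℤ (equivalently gcd(n₁,…,n_r) = 1, equivalently there exist integers c₁,…,c_r with ∑ c_i n_i = 1); is infinite. -/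
lemma coprimePart (c : ℕ) : ∀ v : ℕ, v ≠ 0 → ∃ t : ℕ, t ≠ 0 ∧ t ∣ v ∧ Nat.Coprime t c ∧
    ∀ p : ℕ, p.Prime → p ∣ v → ¬ p ∣ c → p ∣ t := by
  intro v
  induction v using Nat.strong_induction_on with
  | _ v ih =>
    intro hv
    by_cases hco : Nat.Coprime v c
    · exact ⟨v, hv, dvd_rfl, hco, fun p _ hp _ => hp⟩
    · obtain ⟨p, hp, hpd⟩ := Nat.exists_prime_and_dvd hco
      have hpv : p ∣ v := hpd.trans (Nat.gcd_dvd_left v c)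
      have hpc : p ∣ c := hpd.trans (Nat.gcd_dvd_right v c)
      obtain ⟨u, hu⟩ := hpv
      have hu0 : u ≠ 0 := by rintro rfl; simp at hu; exact hv hu
      have hult : u < v := by
        have := hp.two_le
        calc u < p * u := by nlinarith [Nat.pos_of_ne_zero hu0]
        _ = v := hu.symm
      obtain ⟨t, ht0, htd, htc, htp⟩ := ih u hult hu0
      refine ⟨t, ht0, htd.trans ⟨p, by rw [hu, mul_comm]⟩, htc, ?_⟩
      intro q hq hqv hqc
      refine htp q hq ?_ hqc
      have hqp : q ≠ p := by rintro rfl; exact hqc hpc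
      have : q ∣ p * u := hu ▸ hqv
      rcases (Nat.Prime.dvd_mul hq).mp this with h | h
      · exact absurd ((Nat.prime_dvd_prime_iff_eq hq hp).mp h) hqp
      · exact h

lemma prog_infinite0 (a m ε : ℤ) (hm : 0 < m) (hε : ε = 1 ∨ ε = -1) :
    {x : ℤ | 0 < ε * x ∧ x ≡ a [ZMOD m]}.Infinite := by
  apply Set.infinite_of_injective_forall_mem
    (f := fun s : ℕ => a + ε * m * (1 + |a| + s))
  · intro s s' h
    simp only [add_right_inj] at h
    have hne : ε * m ≠ 0 := by rcases hε with rfl | rfl <;> simp <;> omega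
    have := mul_left_cancel₀ hne h
    exact_mod_cast by omega
  · intro s
    refine ⟨?_, ?_⟩
    · have h1 : (0:ℤ) ≤ s := Int.natCast_nonneg s
      have h3 := le_abs_self a
      have h4 := neg_abs_le a
      show 0 < ε * _
      rcases hε with rfl | rfl <;> nlinarith
    · exact Int.modEq_iff_dvd.mpr ⟨-(ε * (1 + |a| + s)), by ring⟩


lemma prog_infinite (a m v ε : ℤ) (ham : IsCoprime a m) (hm : 0 < m) (hv : v ≠ 0)
    (hε : ε = 1 ∨ ε = -1) :
    {x : ℤ | 0 < ε * x ∧ x ≡ a [ZMOD m] ∧ IsCoprime x v}.Infinite := by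
  obtain ⟨t, ht0, htd, htc, htp⟩ := coprimePart (a * m).natAbs v.natAbs
    (by simpa using hv)
  set V : ℤ := (v.natAbs : ℤ) with hV
  have hV1 : 1 ≤ V := by
    have : v.natAbs ≠ 0 := by simpa using hv
    omega
  have ht1 : 1 ≤ (t : ℤ) := by omega
  set g : ℕ → ℤ := fun s => a + ε * (m * t * (1 + V * (1 + |a| + s))) with hg
  apply Set.infinite_of_injective_forall_mem (f := g)
  · intro s s' h
    simp only [hg, add_right_inj] at h
    have hne : ε * (m * t * V) ≠ 0 := by
      rcases hε with rfl | rfl <;> simp <;> push_neg <;> omega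
    have : ε * (m * t * V) * s = ε * (m * t * V) * s' := by linear_combination h
    have := mul_left_cancel₀ hne this
    exact_mod_cast this
  · intro s
    have hmod : g s ≡ a [ZMOD m] :=
      Int.modEq_iff_dvd.mpr ⟨-(ε * (t * (1 + V * (1 + |a| + s)))), by rw [hg]; ring⟩
    refine ⟨?_, hmod, ?_⟩
    · have h1 : (0:ℤ) ≤ s := Int.natCast_nonneg s
      have h3 := le_abs_self a
      have h4 := neg_abs_le a
      have h6 : 1 ≤ m * (t:ℤ) := by nlinarith
      have h5 : 1 + |a| ≤ 1 + V * (1 + |a| + s) := by nlinarith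
      have key : 1 + |a| ≤ m * t * (1 + V * (1 + |a| + s)) := by
        calc 1 + |a| ≤ 1 + V * (1 + |a| + s) := h5
        _ ≤ m * t * (1 + V * (1 + |a| + s)) := le_mul_of_one_le_left (by linarith) h6
      show 0 < ε * g s
      rcases hε with rfl | rfl <;> simp only [hg] <;> nlinarith
    · rw [Int.isCoprime_iff_gcd_eq_one]
      by_contra hgcd
      obtain ⟨p, hp, hpd⟩ := Nat.exists_prime_and_dvd hgcd
      have hpgsN : p ∣ (g s).natAbs := hpd.trans (Nat.gcd_dvd_left _ _)
      have hpvN : p ∣ v.natAbs := hpd.trans (Nat.gcd_dvd_right _ _)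
      have hpgs : (p:ℤ) ∣ g s := Int.dvd_natAbs.mp (Int.natCast_dvd_natCast.mpr hpgsN)
      have hpV : (p:ℤ) ∣ V := Int.natCast_dvd_natCast.mpr hpvN
      have hpZ : Prime (p:ℤ) := by rw [Int.prime_iff_natAbs_prime]; simpa using hp
      have hmgsa : m ∣ g s - a := ⟨ε * (t * (1 + V * (1 + |a| + s))), by rw [hg]; ring⟩
      have hdvd1 : ¬ ((p:ℤ) ∣ 1) := by
        intro h
        have := Int.eq_one_of_dvd_one (by positivity) h
        have := hp.one_lt
        omega
      by_cases hpm : (p:ℤ) ∣ m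
      · have hpa : (p:ℤ) ∣ a := by
          simpa [sub_sub_cancel] using dvd_sub hpgs (hpm.trans hmgsa)
        have hu := ham.isUnit_of_dvd' hpa hpm
        rcases Int.isUnit_iff.mp hu with h | h
        · have := hp.one_lt; omega
        · have := hp.one_lt; omega
      · by_cases hpc : p ∣ (a * m).natAbs
        · have hpam : (p:ℤ) ∣ a * m := Int.dvd_natAbs.mp (Int.natCast_dvd_natCast.mpr hpc)
          have hpa : (p:ℤ) ∣ a := (hpZ.dvd_mul.mp hpam).resolve_right hpm
          have hdiff : (p:ℤ) ∣ ε * (m * t * (1 + V * (1 + |a| + s))) := by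
            have : g s - a = ε * (m * t * (1 + V * (1 + |a| + s))) := by rw [hg]; ring
            exact this ▸ (by simpa using dvd_sub hpgs hpa)
          have hpd3 : (p:ℤ) ∣ m * t * (1 + V * (1 + |a| + s)) := by
            rcases hε with rfl | rfl
            · simpa using hdiff
            · simpa using hdiff
          rcases hpZ.dvd_mul.mp hpd3 with h | h
          · rcases hpZ.dvd_mul.mp h with h' | h'
            · exact hpm h'
            · have hpt : p ∣ t := Int.natCast_dvd_natCast.mp h'
              have : p ∣ Nat.gcd t ((a*m).natAbs) := Nat.dvd_gcd hpt hpc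
              rw [htc.gcd_eq_one] at this
              exact absurd (Nat.dvd_one.mp this) (by have := hp.one_lt; omega)
          · have h1 : (p:ℤ) ∣ V * (1 + |a| + s) := hpV.mul_right _
            exact hdvd1 (by simpa using dvd_sub h h1)
        · have hpt : p ∣ t := htp p hp hpvN hpc
          have htdvd : (t:ℤ) ∣ g s - a := ⟨ε * (m * (1 + V * (1 + |a| + s))), by rw [hg]; ring⟩
          have hpa : (p:ℤ) ∣ a := by
            simpa [sub_sub_cancel] using
              dvd_sub hpgs ((Int.natCast_dvd_natCast.mpr hpt).trans htdvd)
          exact hpc (Int.natCast_dvd_natCast.mp (Int.dvd_natAbs.mpr (hpa.mul_right m)))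

open MvPolynomial in
lemma eval_ne_zero_of_infinite : ∀ (r : ℕ) (f : MvPolynomial (Fin r) ℚ), f ≠ 0 →
    ∀ A : Fin r → Set ℤ, (∀ i, (A i).Infinite) →
    ∃ n : Fin r → ℤ, (∀ i, n i ∈ A i) ∧ MvPolynomial.eval (fun i => (n i : ℚ)) f ≠ 0 := by
  intro r
  induction r with
  | zero =>
    intro f hf A hA
    obtain ⟨c, rfl⟩ := MvPolynomial.C_surjective (Fin 0) f
    exact ⟨fun i => i.elim0, fun i => i.elim0, by simpa using hf⟩
  | succ r ih =>
    intro f hf A hA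
    set F := MvPolynomial.finSuccEquiv ℚ r f with hFdef
    have hF : F ≠ 0 := by
      intro h
      apply hf
      have := congrArg (MvPolynomial.finSuccEquiv ℚ r).symm h
      simpa [hFdef] using this
    have hlead : F.leadingCoeff ≠ 0 := Polynomial.leadingCoeff_ne_zero.mpr hF
    obtain ⟨n', hn'mem, hn'⟩ := ih F.leadingCoeff hlead (fun i => A i.succ) (fun i => hA _)
    set P := F.map (MvPolynomial.eval (fun i => ((n' i : ℤ) : ℚ))) with hPdef
    have hcoeff : P.coeff F.natDegree ≠ 0 := by
      rw [hPdef, Polynomial.coeff_map, Polynomial.coeff_natDegree]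
      exact hn'
    have hP : P ≠ 0 := fun h => hcoeff (by rw [h]; simp)
    have himg : ((fun x : ℤ => (x : ℚ)) '' (A 0)).Infinite :=
      (hA 0).image (fun x _ y _ h => by exact_mod_cast h)
    obtain ⟨y, hy1, hy2⟩ := (himg.diff (Polynomial.finite_setOf_isRoot hP)).nonempty
    obtain ⟨x, hxA, rfl⟩ := hy1
    refine ⟨Fin.cons x n', ?_, ?_⟩
    · intro i
      induction i using Fin.cases with
      | zero => simpa using hxA
      | succ j => simpa using hn'mem j
    · have hfun : (fun i => (((Fin.cons x n' : Fin (r+1) → ℤ) i : ℤ) : ℚ)) =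
          Fin.cons (x : ℚ) (fun i => ((n' i : ℤ) : ℚ)) := by
        funext i
        induction i using Fin.cases with
        | zero => simp
        | succ j => simp
      rw [hfun, MvPolynomial.eval_eq_eval_mv_eval']
      exact fun h => hy2 h




/-- As in Statement 0, but with `r > 1` and assuming there is an index `i₀`
with either `i₀ ∉ T`, or `i₀ ∈ T` and `a i₀` a unit modulo `m i₀`; then there are
infinitely many tuples satisfying conditions (1)-(3) which moreover generate the unit
ideal of ℤ. -/
theorem infinite_integer_points_nonvanishing_coprime
    (r : ℕ) (hr : 1 < r) (f : MvPolynomial (Fin r) ℚ) (hf : f ≠ 0)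
    (Splus Sminus : Finset (Fin r)) (hdisj : Disjoint Splus Sminus)
    (T : Finset (Fin r)) (m a : Fin r → ℤ)
    (hm : ∀ i ∈ T, 1 < m i) (ha : ∀ i ∈ T, 0 ≤ a i ∧ a i < m i)
    (hi₀ : ∃ i₀ : Fin r, i₀ ∉ T ∨ (i₀ ∈ T ∧ IsCoprime (a i₀) (m i₀))) :
    {n : Fin r → ℤ |
      MvPolynomial.eval (fun i => (n i : ℚ)) f ≠ 0 ∧ (∏ i, n i) ≠ 0 ∧
      (∀ i ∈ T, n i ≡ a i [ZMOD m i]) ∧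
      (∀ i ∈ Splus, 0 < n i) ∧ (∀ i ∈ Sminus, n i < 0) ∧
      (∃ c : Fin r → ℤ, ∑ i, c i * n i = 1)}.Infinite := by
  obtain ⟨i₀, hi₀⟩ := hi₀
  obtain ⟨j, hj⟩ := Fintype.exists_ne_of_one_lt_card (by simpa using hr) i₀
  set a' : Fin r → ℤ := fun i => if i ∈ T then a i else 0 with ha'
  set M : Fin r → ℤ := fun i => if i ∈ T then m i else 1 with hM'
  have hM : ∀ i, 0 < M i := by
    intro i
    simp only [hM']
    split
    · have := hm i (by assumption); omega
    · omega
  have hcop : IsCoprime (a' i₀) (M i₀) := by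
    rcases hi₀ with h | ⟨h1, h2⟩
    · simp only [ha', hM', if_neg h]
      exact isCoprime_zero_left.mpr isUnit_one
    · simpa only [ha', hM', if_pos h1] using h2
  set ε : Fin r → ℤ := fun i => if i ∈ Sminus then -1 else 1 with hε'
  have hε : ∀ i, ε i = 1 ∨ ε i = -1 := by
    intro i; simp only [hε']; split <;> simp
  set v : ℤ := ε j * (M j * (1 + |a' j|)) + a' j with hv'
  have hvsign : 0 < ε j * v := by
    have h1 := hM j
    have h3 := le_abs_self (a' j)
    have h4 := neg_abs_le (a' j)
    rcases hε j with h | h <;> rw [hv', h] <;> nlinarith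
  have hv0 : v ≠ 0 := by
    rcases hε j with h | h <;> rw [h] at hvsign <;> intro hc <;> rw [hc] at hvsign <;> simp at hvsign
  have hvmod : v ≡ a' j [ZMOD M j] :=
    Int.modEq_iff_dvd.mpr ⟨-(ε j * (1 + |a' j|)), by rw [hv']; ring⟩
  set w : ℤ := 1 + M j with hw'
  have hw1 : 1 < w := by have := hM j; omega
  have hwmod : w ≡ 1 [ZMOD M j] := Int.modEq_iff_dvd.mpr ⟨-1, by rw [hw']; ring⟩
  classical
  set A : Fin r → Set ℤ := fun i =>
    if i = i₀ then {x | 0 < ε i₀ * x ∧ x ≡ a' i₀ [ZMOD M i₀] ∧ IsCoprime x (v * w)}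
    else if i = j then {x | ∃ k : ℕ, x = v * w ^ k}
    else {x | 0 < ε i * x ∧ x ≡ a' i [ZMOD M i]} with hA'
  clear_value a' M ε v w A
  have hAinf : ∀ i, (A i).Infinite := by
    intro i
    by_cases h1 : i = i₀
    · subst h1
      simp only [hA', if_pos rfl]
      exact prog_infinite _ _ _ _ hcop (hM _) (mul_ne_zero hv0 (by omega)) (hε _)
    · by_cases h2 : i = j
      · subst h2
        simp only [hA', if_neg h1, if_pos rfl]
        apply Set.infinite_of_injective_forall_mem (f := fun k : ℕ => v * w ^ k)
        · intro k k' h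
          have h' := mul_left_cancel₀ hv0 h
          have hsm : StrictMono (fun k : ℕ => w ^ k) := fun x y hxy =>
            pow_lt_pow_right₀ hw1 hxy
          exact hsm.injective h'
        · intro k; exact ⟨k, rfl⟩
      · simp only [hA', if_neg h1, if_neg h2]
        exact prog_infinite0 _ _ _ (hM _) (hε _)
  by_contra hinf
  rw [Set.not_infinite] at hinf
  set Fi : Finset ℤ := hinf.toFinset.image (fun n => n i₀) with hFi
  obtain ⟨n, hmem, heval⟩ := eval_ne_zero_of_infinite r f hf
    (Function.update A i₀ (A i₀ \ ↑Fi))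
    (by
      intro i
      by_cases h : i = i₀
      · rw [h, Function.update_self]; exact (hAinf i₀).diff (Fi.finite_toSet)
      · rw [Function.update_of_ne h]; exact hAinf i)
  have hni₀ : n i₀ ∈ A i₀ \ ↑Fi := by
    have := hmem i₀; rwa [Function.update_self] at this
  have hmemA : ∀ i, n i ∈ A i := by
    intro i
    by_cases h : i = i₀
    · subst h; exact hni₀.1
    · have := hmem i; rwa [Function.update_of_ne h] at this
  -- membership in the i₀ set
  have hAi₀ : 0 < ε i₀ * n i₀ ∧ n i₀ ≡ a' i₀ [ZMOD M i₀] ∧ IsCoprime (n i₀) (v * w) := by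
    have := hmemA i₀; simp only [hA', if_pos rfl] at this; exact this
  obtain ⟨k, hk⟩ : ∃ k : ℕ, n j = v * w ^ k := by
    have := hmemA j; simp only [hA', if_neg hj, if_pos rfl] at this; exact this
  have hkey : ∀ i, 0 < ε i * n i ∧ n i ≡ a' i [ZMOD M i] := by
    intro i
    by_cases h1 : i = i₀
    · subst h1; exact ⟨hAi₀.1, hAi₀.2.1⟩
    · by_cases h2 : i = j
      · rw [h2]
        constructor
        · rw [hk]
          have h5 : ε j * (v * w ^ k) = (ε j * v) * w ^ k := by ring
          rw [h5]
          exact mul_pos hvsign (pow_pos (by omega) k)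
        · rw [hk]
          have h6 : v * w ^ k ≡ v * 1 ^ k [ZMOD M j] :=
            (Int.ModEq.refl v).mul (hwmod.pow k)
          rw [one_pow, mul_one] at h6
          exact h6.trans hvmod
      · have := hmemA i; simp only [hA', if_neg h1, if_neg h2] at this; exact this
  have hnz : ∀ i, n i ≠ 0 := by
    intro i hc
    have := (hkey i).1
    rw [hc, mul_zero] at this
    exact lt_irrefl 0 this
  -- n is in the target set
  have hS : n ∈ {n : Fin r → ℤ |
      MvPolynomial.eval (fun i => (n i : ℚ)) f ≠ 0 ∧ (∏ i, n i) ≠ 0 ∧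
      (∀ i ∈ T, n i ≡ a i [ZMOD m i]) ∧
      (∀ i ∈ Splus, 0 < n i) ∧ (∀ i ∈ Sminus, n i < 0) ∧
      (∃ c : Fin r → ℤ, ∑ i, c i * n i = 1)} := by
    refine ⟨heval, ?_, ?_, ?_, ?_, ?_⟩
    · rw [Finset.prod_ne_zero_iff]
      exact fun i _ => hnz i
    · intro i hiT
      have := (hkey i).2
      simpa only [ha', hM', if_pos hiT] using this
    · intro i hiP
      have hiN : i ∉ Sminus := Finset.disjoint_left.mp hdisj hiP
      have := (hkey i).1
      simp only [hε', if_neg hiN, one_mul] at this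
      exact this
    · intro i hiN
      have := (hkey i).1
      simp only [hε', if_pos hiN] at this
      linarith
    · have hco : IsCoprime (n i₀) (n j) := by
        apply (hAi₀.2.2.pow_right (n := k + 1)).of_isCoprime_of_dvd_right
        exact ⟨v ^ k * w, by rw [hk]; ring⟩
      obtain ⟨u, u', huv⟩ := hco
      refine ⟨fun i => if i = i₀ then u else if i = j then u' else 0, ?_⟩
      have hvanish : ∀ i ∈ Finset.univ, i ∉ ({i₀, j} : Finset (Fin r)) →
          (if i = i₀ then u else if i = j then u' else 0) * n i = 0 := by
        intro i _ hi
        simp only [Finset.mem_insert, Finset.mem_singleton, not_or] at hi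
        rw [if_neg hi.1, if_neg hi.2, zero_mul]
      rw [← Finset.sum_subset (Finset.subset_univ {i₀, j}) hvanish,
        Finset.sum_pair (Ne.symm hj)]
      rw [if_pos rfl, if_neg hj, if_pos rfl]
      linarith [huv]
  have : n i₀ ∈ Fi := by
    rw [hFi]
    exact Finset.mem_image.mpr ⟨n, hinf.mem_toFinset.mpr hS, rfl⟩
  exact hni₀.2 this
end

section
/- For a Laurent polynomial f = ∑_w c_w t^w ∈ ℤ[t,t⁻¹] define its weighted degree d(f) = ∑_w w·c_w ∈ ℤ. Let s = (s₁,s₂,s₃) ∈ ℤ³ and let π ⊆ (ℤ≥0)³ be a 3-dimensional partition of cardinality n, with partition function Q, trace function V, splitting V = V⁺ + V⁻, and S = s₁+s₂+s₃ as in the context. Then d(V⁺) = ∑_{k∈π}(s₁k₁+s₂k₂+s₃k₃), d(V⁻) = ∑_{k∈π}(s₁k₁+s₂k₂+s₃k₃) + n·S, and hence d(V) = 2·∑_{k∈π}(s₁k₁+s₂k₂+s₃k₃) + n·S. (In the paper this is phrased as the determinant identities det V⁺(t) = det Q(t), det V⁻(t) = det(−t^{−S}Q(t⁻¹)), det V(t)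 = t^{2∑_{k∈π} s·k + n(s₁+s₂+s₃)}.) -/
open LaurentPolynomial

/-- A 3-dimensional partition: a finite subset of `(ℤ≥0)³` that is downward closed. -/
def IsPartition3 (π : Finset (ℕ × ℕ × ℕ)) : Prop :=
  ∀ k ∈ π, ∀ k' : ℕ × ℕ × ℕ, k'.1 ≤ k.1 → k'.2.1 ≤ k.2.1 → k'.2.2 ≤ k.2.2 → k' ∈ π

/-- The partition function `Q(t) = ∑_{k∈π} t^{s₁k₁+s₂k₂+s₃k₃}`. -/
noncomputable def partitionFun (s₁ s₂ s₃ : ℤ) (π : Finset (ℕ × ℕ × ℕ)) :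
    LaurentPolynomial ℤ :=
  ∑ k ∈ π, T (s₁ * (k.1 : ℤ) + s₂ * (k.2.1 : ℤ) + s₃ * (k.2.2 : ℤ))

/-- The trace function
`V(t) = Q(t) − t^{−S}Q(t⁻¹) + Q(t)Q(t⁻¹)(1−t^{s₁})(1−t^{s₂})(1−t^{s₃})t^{−S}`. -/
noncomputable def traceFun (s₁ s₂ s₃ : ℤ) (π : Finset (ℕ × ℕ × ℕ)) : LaurentPolynomial ℤ :=
  partitionFun s₁ s₂ s₃ π - T (-(s₁ + s₂ + s₃)) * invert (partitionFun s₁ s₂ s₃ π) +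
    partitionFun s₁ s₂ s₃ π * invert (partitionFun s₁ s₂ s₃ π) *
      (1 - T s₁) * (1 - T s₂) * (1 - T s₃) * T (-(s₁ + s₂ + s₃))

/-- The positive part `V⁺(t) = Q(t) − Q(t)Q(t⁻¹)(1−t^{s₁})(1−t^{s₂})t^{−s₁−s₂}`. -/
noncomputable def Vplus (s₁ s₂ s₃ : ℤ) (π : Finset (ℕ × ℕ × ℕ)) : LaurentPolynomial ℤ :=
  partitionFun s₁ s₂ s₃ π -
    partitionFun s₁ s₂ s₃ π * invert (partitionFun s₁ s₂ s₃ π) *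
      (1 - T s₁) * (1 - T s₂) * T (-s₁ - s₂)

/-- The negative part
`V⁻(t) = −t^{−S}Q(t⁻¹) + Q(t)Q(t⁻¹)(1−t^{s₁})(1−t^{s₂})t^{−S}`, `S = s₁+s₂+s₃`. -/
noncomputable def Vminus (s₁ s₂ s₃ : ℤ) (π : Finset (ℕ × ℕ × ℕ)) : LaurentPolynomial ℤ :=
  -(T (-(s₁ + s₂ + s₃)) * invert (partitionFun s₁ s₂ s₃ π)) +
    partitionFun s₁ s₂ s₃ π * invert (partitionFun s₁ s₂ s₃ π) *
      (1 - T s₁) * (1 - T s₂) * T (-(s₁ + s₂ + s₃))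

/-- The weighted degree `d(∑ c_w t^w) = ∑ w·c_w` of a Laurent polynomial. -/
noncomputable def wdeg (f : LaurentPolynomial ℤ) : ℤ :=
  Finsupp.sum (AddMonoidAlgebra.coeff f) fun w c => w * c

/-- The augmentation `ε(∑ c_w t^w) = ∑ c_w` (evaluation at `t = 1`), as a ring hom. -/
noncomputable def eps : LaurentPolynomial ℤ →+* ℤ :=
  AddMonoidAlgebra.liftNCRingHom (RingHom.id ℤ) 1 fun _ _ => Commute.all _ _

lemma eps_single (a c : ℤ) : eps (AddMonoidAlgebra.single a c) = c := by
  have h := AddMonoidAlgebra.liftNC_single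
    ((RingHom.id ℤ : ℤ →+* ℤ) : ℤ →+ ℤ) (1 : Multiplicative ℤ →* ℤ) a c
  simpa [eps, AddMonoidAlgebra.liftNCRingHom] using h

lemma eps_T (a : ℤ) : eps (T a) = 1 := eps_single a 1

lemma wdeg_single (a c : ℤ) : wdeg (AddMonoidAlgebra.single a c) = a * c :=
  Finsupp.sum_single_index (mul_zero a)

lemma wdeg_T (a : ℤ) : wdeg (T a) = a := by
  simpa using wdeg_single a 1

lemma wdeg_zero : wdeg (0 : LaurentPolynomial ℤ) = 0 := by
  simp [wdeg]

lemma wdeg_one : wdeg (1 : LaurentPolynomial ℤ) = 0 := by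
  simpa using wdeg_T 0

lemma wdeg_add (f g : LaurentPolynomial ℤ) : wdeg (f + g) = wdeg f + wdeg g := by
  unfold wdeg; rw [AddMonoidAlgebra.coeff_add]; exact Finsupp.sum_add_index' (fun w => mul_zero w) fun w c d => mul_add w c d

lemma wdeg_neg (f : LaurentPolynomial ℤ) : wdeg (-f) = -wdeg f := by
  have := wdeg_add f (-f)
  simp only [add_neg_cancel, wdeg_zero] at this
  linarith

lemma wdeg_sub (f g : LaurentPolynomial ℤ) : wdeg (f - g) = wdeg f - wdeg g := by
  rw [sub_eq_add_neg, wdeg_add, wdeg_neg, sub_eq_add_neg]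

lemma wdeg_add' (f g : LaurentPolynomial ℤ) : wdeg (f + g) = wdeg f + wdeg g :=
  wdeg_add f g

lemma wdeg_mul (f g : LaurentPolynomial ℤ) :
    wdeg (f * g) = wdeg f * eps g + eps f * wdeg g := by
  induction f using AddMonoidAlgebra.induction_linear with
  | zero => simp [wdeg_zero]
  | add f f' hf hf' =>
    simp only [add_mul, wdeg_add, wdeg_add', map_add, hf, hf']; ring
  | single a c =>
    induction g using AddMonoidAlgebra.induction_linear with
    | zero => simp [wdeg_zero]
    | add g g' hg hg' =>
      simp only [mul_add, wdeg_add, wdeg_add', map_add, hg, hg']; ring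
    | single b d =>
      rw [AddMonoidAlgebra.single_mul_single, wdeg_single, wdeg_single, wdeg_single,
        eps_single, eps_single]
      ring

lemma invert_single (a c : ℤ) :
    invert (AddMonoidAlgebra.single a c : LaurentPolynomial ℤ) = AddMonoidAlgebra.single (-a) c := by
  rw [single_eq_C_mul_T, map_mul, invert_C, invert_T, single_eq_C_mul_T]

lemma eps_invert (f : LaurentPolynomial ℤ) : eps (invert f) = eps f := by
  induction f using AddMonoidAlgebra.induction_linear with
  | zero => simp
  | add f f' hf hf' => simp only [map_add, hf, hf']
  | single a c => rw [invert_single, eps_single, eps_single]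

lemma wdeg_invert (f : LaurentPolynomial ℤ) : wdeg (invert f) = -wdeg f := by
  induction f using AddMonoidAlgebra.induction_linear with
  | zero => simp [wdeg_zero]
  | add f f' hf hf' => simp only [map_add, wdeg_add, wdeg_add', hf, hf']; ring
  | single a c => rw [invert_single, wdeg_single, wdeg_single]; ring

lemma wdeg_sum {ι : Type*} (s : Finset ι) (f : ι → LaurentPolynomial ℤ) :
    wdeg (∑ i ∈ s, f i) = ∑ i ∈ s, wdeg (f i) := by
  classical
  induction s using Finset.induction with
  | empty => simp [wdeg_zero]
  | @insert a s h ih => rw [Finset.sum_insert h, wdeg_add, ih, Finset.sum_insert h]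

lemma eps_partitionFun (s₁ s₂ s₃ : ℤ) (π : Finset (ℕ × ℕ × ℕ)) :
    eps (partitionFun s₁ s₂ s₃ π) = (π.card : ℤ) := by
  rw [partitionFun, map_sum]
  simp [eps_T]

lemma wdeg_partitionFun (s₁ s₂ s₃ : ℤ) (π : Finset (ℕ × ℕ × ℕ)) :
    wdeg (partitionFun s₁ s₂ s₃ π) =
      ∑ k ∈ π, (s₁ * (k.1 : ℤ) + s₂ * (k.2.1 : ℤ) + s₃ * (k.2.2 : ℤ)) := by
  rw [partitionFun, wdeg_sum]
  simp [wdeg_T]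

/-- for a 3-dimensional partition `π` of cardinality `n`,
`d(V⁺) = ∑_{k∈π} s·k`, `d(V⁻) = ∑_{k∈π} s·k + n·S`, and
`d(V) = 2∑_{k∈π} s·k + n·S`. -/
theorem wdeg_Vplus_Vminus_trace
    (s₁ s₂ s₃ : ℤ) (π : Finset (ℕ × ℕ × ℕ)) (hπ : IsPartition3 π) (n : ℕ)
    (hn : π.card = n) :
    wdeg (Vplus s₁ s₂ s₃ π) =
        ∑ k ∈ π, (s₁ * (k.1 : ℤ) + s₂ * (k.2.1 : ℤ) + s₃ * (k.2.2 : ℤ)) ∧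
    wdeg (Vminus s₁ s₂ s₃ π) =
        (∑ k ∈ π, (s₁ * (k.1 : ℤ) + s₂ * (k.2.1 : ℤ) + s₃ * (k.2.2 : ℤ))) +
          (n : ℤ) * (s₁ + s₂ + s₃) ∧
    wdeg (traceFun s₁ s₂ s₃ π) =
        2 * (∑ k ∈ π, (s₁ * (k.1 : ℤ) + s₂ * (k.2.1 : ℤ) + s₃ * (k.2.2 : ℤ))) +
          (n : ℤ) * (s₁ + s₂ + s₃) := by
  subst hn
  refine ⟨?_, ?_, ?_⟩ <;>
  · simp only [Vplus, Vminus, traceFun, wdeg_sub, wdeg_add, wdeg_neg, wdeg_mul, wdeg_one,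
      wdeg_T, wdeg_invert, wdeg_partitionFun, eps_invert, eps_partitionFun,
      map_mul, map_sub, map_one, map_neg, eps_T, eps_invert]
    ring
end

section
/- Let s = (s₁,s₂,s₃) ∈ ℤ³ with every s_i even and with S = s₁+s₂+s₃ ≡ 2 (mod 4). Let π ⊆ (ℤ≥0)³ be a 3-dimensional partition of cardinality n, and write its trace function as V(t) = ∑_{w∈ℤ} v_w·t^w with v_w ∈ ℤ. Then ∏_{w∈ℤ} ε(w)^{v_w} = (−1)^n, where the product is the finite product over those w with v_w ≠ 0, and ε(w)^{v_w} denotes the (possibly negative) integer power of ε(w) ∈ {±1}. -/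
open LaurentPolynomial

/-- The sign function `ε : ℤ → {±1}`: `ε(m) = +1` if `m ≡ 1, 2 (mod 4)` and
`ε(m) = −1` if `m ≡ 0, 3 (mod 4)`. -/
def signEps (m : ℤ) : ℤ := if m % 4 = 1 ∨ m % 4 = 2 then 1 else -1

/-! ### Auxiliary machinery: the ring `A2 = (ZMod 2)[ZMod 4]` and reduction map `Phi`. -/

abbrev A2 := AddMonoidAlgebra (ZMod 2) (ZMod 4)

noncomputable def sgl (a : ZMod 4) : A2 := AddMonoidAlgebra.single a (1 : ZMod 2)

lemma sgl_mul (a b : ZMod 4) : sgl a * sgl b = sgl (a + b) := by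
  rw [sgl, sgl, sgl, AddMonoidAlgebra.single_mul_single, one_mul]

lemma one_def' : (1 : A2) = sgl 0 := rfl

lemma sgl_apply (a c : ZMod 4) : (sgl a).coeff c = if a = c then 1 else 0 := Finsupp.single_apply

noncomputable def Phi : LaurentPolynomial ℤ →ₐ[ℤ] A2 :=
  AddMonoidAlgebra.lift ℤ _ ℤ
    ((AddMonoidAlgebra.of (ZMod 2) (ZMod 4)).comp
      (AddMonoidHom.toMultiplicative (Int.castAddHom (ZMod 4))))

lemma Phi_T (m : ℤ) : Phi (T m) = sgl (m : ZMod 4) := by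
  rw [T, Phi, AddMonoidAlgebra.lift_single]
  simp [AddMonoidAlgebra.of_apply, sgl]

lemma Phi_apply (f : LaurentPolynomial ℤ) (c : ZMod 4) :
    (Phi f).coeff c = ∑ w ∈ f.coeff.support, if (w : ZMod 4) = c then (f.coeff w : ZMod 2) else 0 := by
  rw [Phi, AddMonoidAlgebra.lift_apply, Finsupp.sum, AddMonoidAlgebra.coeff_sum, Finsupp.finset_sum_apply]
  refine Finset.sum_congr rfl fun w _ => ?_
  rw [MonoidHom.comp_apply, AddMonoidAlgebra.of_apply]
  rw [AddMonoidAlgebra.coeff_smul_apply, AddMonoidAlgebra.coeff_single, Finsupp.single_apply]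
  simp only [AddMonoidHom.toMultiplicative_apply_apply, toAdd_ofAdd, Int.coe_castAddHom]
  split_ifs <;> simp

lemma prod_neg_one_zpow (s : Finset ℤ) (t : ℤ → ℤ) :
    ∏ w ∈ s, (-1 : ℚ) ^ (t w) = (-1 : ℚ) ^ (∑ w ∈ s, t w) := by
  classical
  induction s using Finset.induction_on with
  | empty => simp
  | insert _ _ h ih =>
      rw [Finset.prod_insert h, Finset.sum_insert h, ih,
        zpow_add₀ (by norm_num : (-1 : ℚ) ≠ 0)]

lemma cast4_iff (m : ℤ) :
    ((m : ZMod 4) = 0 ∨ (m : ZMod 4) = 3) ↔ ¬ (m % 4 = 1 ∨ m % 4 = 2) := by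
  rw [show (0 : ZMod 4) = ((0 : ℤ) : ZMod 4) by norm_num,
    show (3 : ZMod 4) = ((3 : ℤ) : ZMod 4) by norm_num,
    ZMod.intCast_eq_intCast_iff, ZMod.intCast_eq_intCast_iff]
  unfold Int.ModEq
  omega

lemma even_cast4 (m : ℤ) (hm : Even m) : ((m : ZMod 4) = 0 ∨ (m : ZMod 4) = 2) := by
  obtain ⟨j, rfl⟩ := hm
  push_cast
  generalize (j : ZMod 4) = x
  revert x; decide

lemma neg_cast4 (m : ℤ) (hm : Even m) : (((-m : ℤ)) : ZMod 4) = (m : ZMod 4) := by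
  obtain ⟨j, rfl⟩ := hm
  push_cast
  generalize (j : ZMod 4) = x
  revert x; decide

noncomputable def gg : A2 := sgl 2

lemma gg_mul_gg : gg * gg = 1 := by
  rw [gg, sgl_mul, one_def', show (2 + 2 : ZMod 4) = 0 from rfl]

lemma one_add_gg_mul (m : ℤ) (hm : Even m) : (1 + gg) * sgl (m : ZMod 4) = 1 + gg := by
  rcases even_cast4 m hm with h | h
  · rw [h, ← one_def', mul_one]
  · rw [h, ← gg, add_mul, one_mul, gg_mul_gg, add_comm]

lemma one_add_one' : (1 : A2) + 1 = 0 := by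
  rw [one_def', sgl, ← AddMonoidAlgebra.single_add, show (1 + 1 : ZMod 2) = 0 from rfl,
    AddMonoidAlgebra.single_zero]

lemma gg_add_gg : gg + gg = 0 := by
  rw [gg, sgl, ← AddMonoidAlgebra.single_add, show (1 + 1 : ZMod 2) = 0 from rfl,
    AddMonoidAlgebra.single_zero]

lemma sq_one_add_gg : (1 + gg) * (1 + gg) = 0 := by
  calc (1 + gg) * (1 + gg) = (1 + gg * gg) + (gg + gg) := by ring
  _ = (1 : A2) + 1 := by rw [gg_mul_gg, gg_add_gg, add_zero]
  _ = 0 := one_add_one'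

lemma neg_sgl (a : ZMod 4) : -sgl a = sgl a := by
  have h : sgl a + sgl a = 0 := by
    rw [sgl, ← AddMonoidAlgebra.single_add, show (1 + 1 : ZMod 2) = 0 from rfl,
      AddMonoidAlgebra.single_zero]
  exact neg_eq_of_add_eq_zero_left h

lemma one_sub_sgl (a : ZMod 4) : (1 : A2) - sgl a = 1 + sgl a := by
  rw [sub_eq_add_neg, neg_sgl]

/-- if all `sᵢ` are even and `S = s₁+s₂+s₃ ≡ 2 (mod 4)`, then writing
`V(t) = ∑_w v_w t^w` for a 3-dimensional partition `π` of cardinality `n`, one has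
`∏_w ε(w)^{v_w} = (−1)^n` (the product over those `w` with `v_w ≠ 0`). -/
theorem prod_signEps_pow_traceCoeff
    (s₁ s₂ s₃ : ℤ) (hs₁ : Even s₁) (hs₂ : Even s₂) (hs₃ : Even s₃)
    (hS : s₁ + s₂ + s₃ ≡ 2 [ZMOD 4])
    (π : Finset (ℕ × ℕ × ℕ)) (hπ : IsPartition3 π) (n : ℕ) (hn : π.card = n) :
    ∏ w ∈ Finsupp.support (traceFun s₁ s₂ s₃ π).coeff,
        ((signEps w : ℚ)) ^ ((traceFun s₁ s₂ s₃ π).coeff w) = (-1 : ℚ) ^ n := by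
  classical
  subst hn
  set Q := partitionFun s₁ s₂ s₃ π with hQ
  set V := traceFun s₁ s₂ s₃ π with hVdef
  have he : ∀ k : ℕ × ℕ × ℕ, Even (s₁ * (k.1 : ℤ) + s₂ * (k.2.1 : ℤ) + s₃ * (k.2.2 : ℤ)) :=
    fun k => ((hs₁.mul_right _).add (hs₂.mul_right _)).add (hs₃.mul_right _)
  have hPQ : Phi Q = ∑ k ∈ π,
      sgl ((s₁ * (k.1 : ℤ) + s₂ * (k.2.1 : ℤ) + s₃ * (k.2.2 : ℤ) : ℤ) : ZMod 4) := by
    rw [hQ, partitionFun, map_sum]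
    exact Finset.sum_congr rfl fun k _ => Phi_T _
  have hinv : invert Q = ∑ k ∈ π,
      T (-(s₁ * (k.1 : ℤ) + s₂ * (k.2.1 : ℤ) + s₃ * (k.2.2 : ℤ))) := by
    rw [hQ, partitionFun, map_sum]
    exact Finset.sum_congr rfl fun k _ => invert_T _
  have hPQ' : Phi (invert Q) = Phi Q := by
    rw [hinv, map_sum, hPQ]
    exact Finset.sum_congr rfl fun k _ => by rw [Phi_T, neg_cast4 _ (he k)]
  have hSc : ((s₁ + s₂ + s₃ : ℤ) : ZMod 4) = 2 := by
    have h := (ZMod.intCast_eq_intCast_iff (s₁ + s₂ + s₃) 2 4).mpr hS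
    simpa using h
  have hTS : Phi (T (-(s₁ + s₂ + s₃))) = gg := by
    rw [Phi_T, gg]
    congr 1
    rw [Int.cast_neg, hSc]
    decide
  have hfac : ∀ s : ℤ, Even s →
      (1 - Phi (T s)) = 0 ∨ (1 - Phi (T s)) = 1 + gg := by
    intro s hs
    rcases even_cast4 s hs with h | h
    · left; rw [Phi_T, h, ← one_def', sub_self]
    · right; rw [Phi_T, h, one_sub_sgl]; rfl
  have hA : (1 - Phi (T s₁)) * (1 - Phi (T s₂)) * (1 - Phi (T s₃)) = 0 := by
    rcases hfac s₁ hs₁ with h1 | h1 <;> rcases hfac s₂ hs₂ with h2 | h2 <;>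
      rcases hfac s₃ hs₃ with h3 | h3 <;> rw [h1, h2, h3] <;>
      first
        | simp
        | rw [sq_one_add_gg, zero_mul]
  have hPhiV : Phi V = π.card • ((1 : A2) + gg) := by
    rw [hVdef, traceFun, ← hQ]
    simp only [map_add, map_sub, map_mul, map_one]
    rw [hPQ', hTS]
    have h3 : Phi Q * Phi Q * (1 - Phi (T s₁)) * (1 - Phi (T s₂)) * (1 - Phi (T s₃)) * gg
        = 0 := by
      rw [show Phi Q * Phi Q * (1 - Phi (T s₁)) * (1 - Phi (T s₂)) * (1 - Phi (T s₃)) * gg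
          = Phi Q * Phi Q * ((1 - Phi (T s₁)) * (1 - Phi (T s₂)) * (1 - Phi (T s₃))) * gg
          from by ring, hA, mul_zero, zero_mul]
    rw [h3, add_zero]
    rw [show Phi Q - gg * Phi Q = ((1 : A2) - gg) * Phi Q from by rw [sub_mul, one_mul]]
    have hgsub : (1 : A2) - gg = 1 + gg := one_sub_sgl 2
    rw [hgsub, hPQ, Finset.mul_sum]
    rw [Finset.sum_congr rfl fun k _ => one_add_gg_mul _ (he k), Finset.sum_const]
  have c0 : (Phi V).coeff 0 = (π.card : ZMod 2) := by
    rw [hPhiV, AddMonoidAlgebra.coeff_smul, AddMonoidAlgebra.coeff_add, Finsupp.smul_apply, Finsupp.add_apply]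
    rw [one_def', sgl_apply, gg, sgl_apply]
    rw [if_pos rfl, if_neg (by decide : ¬ (2 : ZMod 4) = 0), add_zero]
    simp [nsmul_eq_mul]
  have c3 : (Phi V).coeff 3 = 0 := by
    rw [hPhiV, AddMonoidAlgebra.coeff_smul, AddMonoidAlgebra.coeff_add, Finsupp.smul_apply, Finsupp.add_apply]
    rw [one_def', sgl_apply, gg, sgl_apply]
    rw [if_neg (by decide : ¬ (0 : ZMod 4) = 3), if_neg (by decide : ¬ (2 : ZMod 4) = 3),
      add_zero, smul_zero]
  set M : ℤ := ∑ w ∈ V.coeff.support,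
      (if (w : ZMod 4) = 0 ∨ (w : ZMod 4) = 3 then V.coeff w else 0) with hM
  have hprod : ∏ w ∈ V.coeff.support, ((signEps w : ℚ)) ^ (V.coeff w) = (-1 : ℚ) ^ M := by
    rw [hM, ← prod_neg_one_zpow]
    refine Finset.prod_congr rfl fun w _ => ?_
    by_cases h : ((w : ZMod 4) = 0 ∨ (w : ZMod 4) = 3)
    · rw [if_pos h, signEps, if_neg ((cast4_iff w).mp h)]
      norm_num
    · have h' : (w % 4 = 1 ∨ w % 4 = 2) := by
        by_contra hc
        exact h ((cast4_iff w).mpr hc)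
      rw [if_neg h, signEps, if_pos h']
      norm_num
  have hMC : (M : ZMod 2) = (π.card : ZMod 2) := by
    have key : (M : ZMod 2) = (Phi V).coeff 0 + (Phi V).coeff 3 := by
      rw [hM, Int.cast_sum, Phi_apply, Phi_apply, ← Finset.sum_add_distrib]
      refine Finset.sum_congr rfl fun w _ => ?_
      have hd : ¬ ((0 : ZMod 4) = 3) := by decide
      by_cases hp : (w : ZMod 4) = 0
      · have hq : ¬ (w : ZMod 4) = 3 := by rw [hp]; exact hd
        simp [hp, hq, hd]
      · by_cases hq : (w : ZMod 4) = 3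
        · simp [hp, hq, (by decide : ¬ ((3 : ZMod 4) = 0))]
        · simp [hp, hq]
    rw [key, c0, c3, add_zero]
  have h2 : (2 : ℤ) ∣ M - (π.card : ℤ) := by
    have hmod : M ≡ (π.card : ℤ) [ZMOD (2 : ℕ)] :=
      (ZMod.intCast_eq_intCast_iff _ _ _).mp (by rw [hMC]; push_cast; ring)
    have := Int.ModEq.dvd hmod.symm
    exact_mod_cast this
  obtain ⟨k, hk⟩ := h2
  have hMk : M = (π.card : ℤ) + 2 * k := by linarith
  rw [hprod, hMk, zpow_add₀ (by norm_num : (-1 : ℚ) ≠ 0), zpow_natCast]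
  rw [show (2 : ℤ) * k = (2 : ℤ) * k from rfl, zpow_mul]
  norm_num
end

section
/- Let s = (s₁,s₂,s₃) ∈ ℤ³ with every s_i even and with S = s₁+s₂+s₃ ≡ 2 (mod 4). Let π ⊆ (ℤ≥0)³ be a 3-dimensional partition of cardinality n, and write its trace function as V(t) = ∑_{w∈ℤ} v_w·t^w with v_w ∈ ℤ. Assume moreover v₀ = 0. Then in ℚ one has ∏_{w : v_w ≠ 0} (ε(w)·w)^{−v_w} = (−1)^n · ∏_{w : v_w ≠ 0} w^{−v_w}, where both sides are finite products of integer powers (with possibly negative exponents) of nonzero rational numbers. -/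
open LaurentPolynomial

namespace Stmt6Aux

/-- Evaluation of an integer Laurent polynomial at a unit of a commutative ring. -/
noncomputable def evalAt {R : Type*} [CommRing R] (u : Rˣ) : LaurentPolynomial ℤ →+* R :=
  AddMonoidAlgebra.liftNCRingHom (Int.castRingHom R)
    ((Units.coeHom R).comp (zpowersHom Rˣ u)) (fun _ _ => Commute.all _ _)

lemma evalAt_single {R : Type*} [CommRing R] (u : Rˣ) (n : ℤ) (r : ℤ) :
    evalAt u (AddMonoidAlgebra.single n r) = (r : R) * ((u ^ n : Rˣ) : R) := by
  have h := AddMonoidAlgebra.liftNC_single ((Int.castRingHom R) : ℤ →+ R)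
    ((Units.coeHom R).comp (zpowersHom Rˣ u) : Multiplicative ℤ →* R) n r
  simpa [evalAt, AddMonoidAlgebra.liftNCRingHom] using h

lemma evalAt_T {R : Type*} [CommRing R] (u : Rˣ) (n : ℤ) :
    evalAt u (T n) = ((u ^ n : Rˣ) : R) := by
  rw [show (T n : LaurentPolynomial ℤ) = AddMonoidAlgebra.single n 1 from rfl, evalAt_single]
  simp

lemma evalAt_eq_sum {R : Type*} [CommRing R] (u : Rˣ) (f : LaurentPolynomial ℤ) :
    evalAt u f = ∑ w ∈ f.coeff.support, (f.coeff w : R) * ((u ^ w : Rˣ) : R) := by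
  conv_lhs => rw [← AddMonoidAlgebra.sum_coeff_single f, Finsupp.sum, map_sum]
  exact Finset.sum_congr rfl fun w _ => evalAt_single u w (f.coeff w)

/-- the value of `i^m` for even `m`. -/
def Efun (m : ℤ) : ℤ := if m % 4 = 0 then 1 else -1

lemma upow_mod4_zero {R : Type*} [CommRing R] {u : Rˣ} (hu : u ^ (2:ℤ) = -1)
    {m : ℤ} (hm : m % 4 = 0) : ((u ^ m : Rˣ) : R) = 1 := by
  obtain ⟨q, rfl⟩ : ∃ q, m = 2 * q := ⟨m / 2, by omega⟩
  have : u ^ (2 * q) = ((-1 : Rˣ)) ^ q := by rw [zpow_mul, hu]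
  have he : Even q := ⟨q / 2, by omega⟩
  rw [this, Even.neg_one_zpow (α := Rˣ) he, Units.val_one]

lemma upow_mod4_two {R : Type*} [CommRing R] {u : Rˣ} (hu : u ^ (2:ℤ) = -1)
    {m : ℤ} (hm : m % 4 = 2) : ((u ^ m : Rˣ) : R) = -1 := by
  obtain ⟨q, rfl⟩ : ∃ q, m = 2 * q := ⟨m / 2, by omega⟩
  have : u ^ (2 * q) = ((-1 : Rˣ)) ^ q := by rw [zpow_mul, hu]
  have ho : Odd q := by
    rcases Int.even_or_odd q with h | h
    · exfalso; obtain ⟨t, rfl⟩ := h; omega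
    · exact h
  have hq : ((-1 : Rˣ)) ^ q = -1 := by
    obtain ⟨t, rfl⟩ := ho
    rw [zpow_add, zpow_mul, show ((-1:Rˣ))^(2:ℤ) = 1 by
      rw [show (2:ℤ) = ((2:ℕ):ℤ) from rfl, zpow_natCast, neg_one_sq], one_zpow, zpow_one,
      one_mul]
  rw [this, hq]
  simp

lemma upow_even {R : Type*} [CommRing R] {u : Rˣ} (hu : u ^ (2:ℤ) = -1)
    {m : ℤ} (hm : Even m) : ((u ^ m : Rˣ) : R) = ((Efun m : ℤ) : R) := by
  have : m % 4 = 0 ∨ m % 4 = 2 := by obtain ⟨t, rfl⟩ := hm; omega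
  rcases this with h | h
  · rw [upow_mod4_zero hu h]; simp [Efun, h]
  · rw [upow_mod4_two hu h]
    have : ¬ (m % 4 = 0) := by omega
    simp [Efun, this, h]

lemma Efun_neg {m : ℤ} : Efun (-m) = Efun m := by
  have : (-m) % 4 = 0 ↔ m % 4 = 0 := by omega
  simp [Efun, this]

lemma Efun_one_or_neg_one (m : ℤ) : Efun m = 1 ∨ Efun m = -1 := by
  unfold Efun; split <;> simp

/-- even support predicate -/
def EvenSupp (f : LaurentPolynomial ℤ) : Prop := ∀ w ∈ f.coeff.support, Even w

lemma evenSupp_T {m : ℤ} (hm : Even m) : EvenSupp (T m) := by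
  intro w hw
  have := Finsupp.support_single_subset (show w ∈ (Finsupp.single m (1:ℤ)).support from hw)
  simp only [Finset.mem_singleton] at this
  subst this; exact hm

lemma evenSupp_one : EvenSupp (1 : LaurentPolynomial ℤ) := by
  rw [← T_zero]; exact evenSupp_T ⟨0, rfl⟩

lemma evenSupp_add {f g : LaurentPolynomial ℤ} (hf : EvenSupp f) (hg : EvenSupp g) :
    EvenSupp (f + g) := by
  intro w hw
  rcases Finset.mem_union.mp (Finsupp.support_add (show w ∈ (f.coeff + g.coeff).support from hw)) with h | h
  · exact hf w h
  · exact hg w h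

lemma evenSupp_neg {f : LaurentPolynomial ℤ} (hf : EvenSupp f) : EvenSupp (-f) := by
  intro w hw
  rw [AddMonoidAlgebra.coeff_neg, Finsupp.support_neg] at hw
  exact hf w hw

lemma evenSupp_sub {f g : LaurentPolynomial ℤ} (hf : EvenSupp f) (hg : EvenSupp g) :
    EvenSupp (f - g) := by
  rw [sub_eq_add_neg]; exact evenSupp_add hf (evenSupp_neg hg)

lemma evenSupp_mul {f g : LaurentPolynomial ℤ} (hf : EvenSupp f) (hg : EvenSupp g) :
    EvenSupp (f * g) := by
  classical
  intro w hw
  have := AddMonoidAlgebra.support_coeff_mul_subset f g hw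
  rw [Finset.mem_add] at this
  obtain ⟨a, ha, b, hb, rfl⟩ := this
  exact (hf a ha).add (hg b hb)

lemma evenSupp_sum {ι : Type*} (s : Finset ι) (f : ι → LaurentPolynomial ℤ)
    (hf : ∀ i ∈ s, EvenSupp (f i)) : EvenSupp (∑ i ∈ s, f i) := by
  classical
  intro w hw
  rw [AddMonoidAlgebra.coeff_sum] at hw
  have := Finsupp.support_finset_sum hw
  rw [Finset.mem_biUnion] at this
  obtain ⟨i, hi, hwi⟩ := this
  exact hf i hi w hwi

lemma even_sum {ι : Type*} (s : Finset ι) (f : ι → ℤ)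
    (hf : ∀ i ∈ s, Even (f i)) : Even (∑ i ∈ s, f i) := by
  classical
  induction s using Finset.cons_induction with
  | empty => simp
  | cons a s ha ih =>
      rw [Finset.sum_cons]
      exact (hf a (Finset.mem_cons_self a s)).add
        (ih fun i hi => hf i (Finset.mem_cons_of_mem hi))

lemma neg_one_zpow_congr {m k : ℤ} (h : Even (m - k)) : (-1 : ℚ) ^ m = (-1 : ℚ) ^ k := by
  have h2 : (-1 : ℚ) ≠ 0 := by norm_num
  calc (-1 : ℚ) ^ m = (-1 : ℚ) ^ (m - k + k) := by rw [sub_add_cancel]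
    _ = (-1 : ℚ) ^ (m - k) * (-1 : ℚ) ^ k := zpow_add₀ h2 _ _
    _ = 1 * (-1 : ℚ) ^ k := by rw [h.neg_one_zpow]
    _ = (-1 : ℚ) ^ k := one_mul _

lemma prod_neg_one_zpow {ι : Type*} (s : Finset ι) (f : ι → ℤ) :
    ∏ i ∈ s, (-1 : ℚ) ^ f i = (-1 : ℚ) ^ (∑ i ∈ s, f i) := by
  classical
  induction s using Finset.cons_induction with
  | empty => simp
  | cons a s ha ih =>
      rw [Finset.prod_cons, Finset.sum_cons, ih, ← zpow_add₀ (by norm_num : (-1:ℚ) ≠ 0)]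

/-- the unit `i` in the Gaussian integers. -/
def iUnit : GaussianIntˣ := ⟨⟨0,1⟩, ⟨0,-1⟩, by decide, by decide⟩

lemma iUnit_sq : iUnit ^ (2:ℤ) = -1 := by
  apply Units.ext
  rw [show (2:ℤ) = ((2:ℕ):ℤ) from rfl, zpow_natCast, Units.val_pow_eq_pow_val]
  show (⟨0,1⟩ : GaussianInt) ^ 2 = ((-1 : GaussianIntˣ) : GaussianInt)
  decide

end Stmt6Aux

/-- if all `sᵢ` are even, `S = s₁+s₂+s₃ ≡ 2 (mod 4)`, `π` is a
3-dimensional partition of cardinality `n`, and the coefficient `v₀` of the trace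
function `V(t) = ∑_w v_w t^w` vanishes, then in ℚ one has
`∏_{w : v_w ≠ 0} (ε(w)·w)^{−v_w} = (−1)^n · ∏_{w : v_w ≠ 0} w^{−v_w}`. -/
theorem prod_signEps_mul_w_zpow_traceCoeff
    (s₁ s₂ s₃ : ℤ) (hs₁ : Even s₁) (hs₂ : Even s₂) (hs₃ : Even s₃)
    (hS : s₁ + s₂ + s₃ ≡ 2 [ZMOD 4])
    (π : Finset (ℕ × ℕ × ℕ)) (hπ : IsPartition3 π) (n : ℕ) (hn : π.card = n)
    (hv₀ : (traceFun s₁ s₂ s₃ π).coeff 0 = 0) :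
    ∏ w ∈ Finsupp.support (traceFun s₁ s₂ s₃ π).coeff,
        (((signEps w * w : ℤ) : ℚ)) ^ (-((traceFun s₁ s₂ s₃ π).coeff w)) =
      (-1 : ℚ) ^ n *
        ∏ w ∈ Finsupp.support (traceFun s₁ s₂ s₃ π).coeff,
          ((w : ℚ)) ^ (-((traceFun s₁ s₂ s₃ π).coeff w)) := by
  classical
  subst hn
  set V := traceFun s₁ s₂ s₃ π with hVdef
  set Q := partitionFun s₁ s₂ s₃ π with hQdef
  set a : ℕ × ℕ × ℕ → ℤ := fun k => s₁ * (k.1 : ℤ) + s₂ * (k.2.1 : ℤ) + s₃ * (k.2.2 : ℤ)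
    with ha
  have hQsum : Q = ∑ k ∈ π, T (a k) := rfl
  have hVexp : V = Q - T (-(s₁ + s₂ + s₃)) * invert Q +
      Q * invert Q * (1 - T s₁) * (1 - T s₂) * (1 - T s₃) * T (-(s₁ + s₂ + s₃)) := rfl
  have haeven : ∀ k : ℕ × ℕ × ℕ, Even (a k) :=
    fun k => ((hs₁.mul_right _).add (hs₂.mul_right _)).add (hs₃.mul_right _)
  have hSe : Even (s₁ + s₂ + s₃) := (hs₁.add hs₂).add hs₃
  have hSmod : (s₁ + s₂ + s₃) % 4 = 2 := by
    have h := hS; unfold Int.ModEq at h; omega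
  have hiQ : invert Q = ∑ k ∈ π, T (-(a k)) := by
    rw [hQsum, map_sum]; simp only [invert_T]
  -- the support of V consists of even integers
  have hVsupp : ∀ w ∈ V.coeff.support, Even w := by
    have h1 : Stmt6Aux.EvenSupp Q := by
      rw [hQsum]; exact Stmt6Aux.evenSupp_sum _ _ fun k _ => Stmt6Aux.evenSupp_T (haeven k)
    have h2 : Stmt6Aux.EvenSupp (invert Q) := by
      rw [hiQ]; exact Stmt6Aux.evenSupp_sum _ _ fun k _ => Stmt6Aux.evenSupp_T (haeven k).neg
    have h3 : Stmt6Aux.EvenSupp (T (-(s₁ + s₂ + s₃)) : LaurentPolynomial ℤ) :=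
      Stmt6Aux.evenSupp_T hSe.neg
    have hT1 : Stmt6Aux.EvenSupp (1 - T s₁ : LaurentPolynomial ℤ) :=
      Stmt6Aux.evenSupp_sub Stmt6Aux.evenSupp_one (Stmt6Aux.evenSupp_T hs₁)
    have hT2 : Stmt6Aux.EvenSupp (1 - T s₂ : LaurentPolynomial ℤ) :=
      Stmt6Aux.evenSupp_sub Stmt6Aux.evenSupp_one (Stmt6Aux.evenSupp_T hs₂)
    have hT3 : Stmt6Aux.EvenSupp (1 - T s₃ : LaurentPolynomial ℤ) :=
      Stmt6Aux.evenSupp_sub Stmt6Aux.evenSupp_one (Stmt6Aux.evenSupp_T hs₃)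
    rw [hVexp]
    exact Stmt6Aux.evenSupp_add (Stmt6Aux.evenSupp_sub h1 (Stmt6Aux.evenSupp_mul h3 h2))
      (Stmt6Aux.evenSupp_mul (Stmt6Aux.evenSupp_mul (Stmt6Aux.evenSupp_mul
        (Stmt6Aux.evenSupp_mul (Stmt6Aux.evenSupp_mul h1 h2) hT1) hT2) hT3) h3)
  -- evaluation at the Gaussian unit i
  set φ := Stmt6Aux.evalAt (R := GaussianInt) Stmt6Aux.iUnit with hφ
  have hu := Stmt6Aux.iUnit_sq
  set c : ℤ := ∑ k ∈ π, Stmt6Aux.Efun (a k) with hc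
  have hφQ : φ Q = (c : GaussianInt) := by
    rw [hφ, hQsum, map_sum, hc]
    push_cast
    exact Finset.sum_congr rfl fun k _ => by
      rw [Stmt6Aux.evalAt_T, Stmt6Aux.upow_even hu (haeven k)]
  have hφiQ : φ (invert Q) = (c : GaussianInt) := by
    rw [hφ, hiQ, map_sum, hc]
    push_cast
    refine Finset.sum_congr rfl fun k _ => ?_
    rw [Stmt6Aux.evalAt_T, Stmt6Aux.upow_even hu (haeven k).neg, Stmt6Aux.Efun_neg]
  have hφT : φ (T (-(s₁ + s₂ + s₃))) = -1 := by
    rw [hφ, Stmt6Aux.evalAt_T]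
    exact Stmt6Aux.upow_mod4_two hu (by omega)
  have hφs₁ : φ (T s₁) = ((Stmt6Aux.Efun s₁ : ℤ) : GaussianInt) := by
    rw [hφ, Stmt6Aux.evalAt_T, Stmt6Aux.upow_even hu hs₁]
  have hφs₂ : φ (T s₂) = ((Stmt6Aux.Efun s₂ : ℤ) : GaussianInt) := by
    rw [hφ, Stmt6Aux.evalAt_T, Stmt6Aux.upow_even hu hs₂]
  have hφs₃ : φ (T s₃) = ((Stmt6Aux.Efun s₃ : ℤ) : GaussianInt) := by
    rw [hφ, Stmt6Aux.evalAt_T, Stmt6Aux.upow_even hu hs₃]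
  have hφV : φ V = ((2 * c - c * c *
      ((1 - Stmt6Aux.Efun s₁) * (1 - Stmt6Aux.Efun s₂) * (1 - Stmt6Aux.Efun s₃)) : ℤ) :
        GaussianInt) := by
    rw [hVexp]
    simp only [map_add, map_sub, map_mul, map_one, hφQ, hφiQ, hφT, hφs₁, hφs₂, hφs₃]
    push_cast
    ring
  have hφV' : φ V = ((∑ w ∈ V.coeff.support, V.coeff w * Stmt6Aux.Efun w : ℤ) : GaussianInt) := by
    rw [hφ, Stmt6Aux.evalAt_eq_sum]
    push_cast
    refine Finset.sum_congr rfl fun w hw => ?_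
    rw [Stmt6Aux.upow_even hu (hVsupp w hw)]
  have key1 : ∑ w ∈ V.coeff.support, V.coeff w * Stmt6Aux.Efun w = 2 * c - c * c *
      ((1 - Stmt6Aux.Efun s₁) * (1 - Stmt6Aux.Efun s₂) * (1 - Stmt6Aux.Efun s₃)) := by
    have h := hφV'.symm.trans hφV
    exact_mod_cast h
  -- evaluation at the unit 1
  have hψT : ∀ m : ℤ, Stmt6Aux.evalAt (1 : ℤˣ) (T m) = 1 := fun m => by
    rw [Stmt6Aux.evalAt_T, one_zpow, Units.val_one]
  have hψQ : Stmt6Aux.evalAt (1 : ℤˣ) Q = (π.card : ℤ) := by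
    rw [hQsum, map_sum, Finset.sum_congr rfl fun k _ => hψT (a k), Finset.sum_const,
      nsmul_eq_mul, mul_one]
  have hψiQ : Stmt6Aux.evalAt (1 : ℤˣ) (invert Q) = (π.card : ℤ) := by
    rw [hiQ, map_sum, Finset.sum_congr rfl fun k _ => hψT (-(a k)), Finset.sum_const,
      nsmul_eq_mul, mul_one]
  have hψV : Stmt6Aux.evalAt (1 : ℤˣ) V = 0 := by
    rw [hVexp]
    simp only [map_add, map_sub, map_mul, map_one, hψQ, hψiQ, hψT]
    ring
  have hψV' : Stmt6Aux.evalAt (1 : ℤˣ) V = ∑ w ∈ V.coeff.support, V.coeff w := by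
    rw [Stmt6Aux.evalAt_eq_sum]
    simp
  have key2 : ∑ w ∈ V.coeff.support, V.coeff w = 0 := by rw [← hψV', hψV]
  -- the key parity statement
  set M : ℤ := ∑ w ∈ V.coeff.support, (if signEps w = -1 then V.coeff w else 0) with hM
  have hterm : ∀ w ∈ V.coeff.support,
      V.coeff w * Stmt6Aux.Efun w + V.coeff w = 2 * (if signEps w = -1 then V.coeff w else 0) := by
    intro w hw
    have hew := hVsupp w hw
    have h04 : w % 4 = 0 ∨ w % 4 = 2 := by obtain ⟨t, rfl⟩ := hew; omega
    rcases h04 with h | h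
    · have hsE : signEps w = -1 := by simp [signEps, h]
      have hE : Stmt6Aux.Efun w = 1 := by simp [Stmt6Aux.Efun, h]
      rw [if_pos hsE, hE]; ring
    · have hsE : signEps w = 1 := by simp [signEps, h]
      have hE : Stmt6Aux.Efun w = -1 := by simp [Stmt6Aux.Efun, h]
      rw [if_neg (by rw [hsE]; norm_num), hE]; ring
  have key3 : 2 * M = 2 * c - c * c *
      ((1 - Stmt6Aux.Efun s₁) * (1 - Stmt6Aux.Efun s₂) * (1 - Stmt6Aux.Efun s₃)) := by
    have h := Finset.sum_congr rfl hterm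
    rw [Finset.sum_add_distrib, key1, key2, ← Finset.mul_sum, ← hM] at h
    linarith [h]
  have hP : (1 - Stmt6Aux.Efun s₁) * (1 - Stmt6Aux.Efun s₂) * (1 - Stmt6Aux.Efun s₃) = 0 ∨
      (1 - Stmt6Aux.Efun s₁) * (1 - Stmt6Aux.Efun s₂) * (1 - Stmt6Aux.Efun s₃) = 8 := by
    rcases Stmt6Aux.Efun_one_or_neg_one s₁ with h1 | h1 <;>
      rcases Stmt6Aux.Efun_one_or_neg_one s₂ with h2 | h2 <;>
        rcases Stmt6Aux.Efun_one_or_neg_one s₃ with h3 | h3 <;>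
          rw [h1, h2, h3] <;> norm_num
  have hMc : Even (M - c) := by
    rcases hP with h | h
    · rw [h] at key3; exact ⟨0, by linarith⟩
    · rw [h] at key3; exact ⟨-(2 * (c * c)), by linarith⟩
  have hcn : Even (c - (π.card : ℤ)) := by
    have h1 : c - (π.card : ℤ) = ∑ k ∈ π, (Stmt6Aux.Efun (a k) - 1) := by
      rw [Finset.sum_sub_distrib, ← hc, Finset.sum_const, nsmul_eq_mul, mul_one]
    rw [h1]
    refine Stmt6Aux.even_sum _ _ fun k _ => ?_
    rcases Stmt6Aux.Efun_one_or_neg_one (a k) with h | h <;> rw [h]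
    · exact ⟨0, by ring⟩
    · exact ⟨-1, by ring⟩
  have hMn : Even (M - (π.card : ℤ)) := by
    have h := hMc.add hcn
    have h2 : (M - c) + (c - (π.card : ℤ)) = M - (π.card : ℤ) := by ring
    rwa [h2] at h
  -- putting everything together
  have step2 : ∏ w ∈ V.coeff.support, ((signEps w : ℤ) : ℚ) ^ (-(V.coeff w)) = (-1 : ℚ) ^ π.card := by
    calc ∏ w ∈ V.coeff.support, ((signEps w : ℤ) : ℚ) ^ (-(V.coeff w))
        = ∏ w ∈ V.coeff.support, (-1 : ℚ) ^ (if signEps w = -1 then V.coeff w else 0) := by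
          refine Finset.prod_congr rfl fun w hw => ?_
          by_cases h : signEps w = -1
          · rw [if_pos h, h]
            push_cast
            exact Stmt6Aux.neg_one_zpow_congr ⟨-(V.coeff w), by ring⟩
          · have halt : signEps w = 1 ∨ signEps w = -1 := by
              unfold signEps; split <;> simp
            have h1 : signEps w = 1 := halt.resolve_right h
            rw [if_neg h, h1]
            push_cast
            simp
      _ = (-1 : ℚ) ^ (∑ w ∈ V.coeff.support, (if signEps w = -1 then V.coeff w else 0)) :=
          Stmt6Aux.prod_neg_one_zpow _ _
      _ = (-1 : ℚ) ^ M := by rw [← hM]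
      _ = (-1 : ℚ) ^ ((π.card : ℤ)) := Stmt6Aux.neg_one_zpow_congr hMn
      _ = (-1 : ℚ) ^ π.card := zpow_natCast _ _
  calc ∏ w ∈ V.coeff.support, ((signEps w * w : ℤ) : ℚ) ^ (-(V.coeff w))
      = ∏ w ∈ V.coeff.support, (((signEps w : ℤ) : ℚ) ^ (-(V.coeff w)) * ((w : ℚ)) ^ (-(V.coeff w))) := by
        refine Finset.prod_congr rfl fun w _ => ?_
        rw [Int.cast_mul, mul_zpow]
    _ = (∏ w ∈ V.coeff.support, ((signEps w : ℤ) : ℚ) ^ (-(V.coeff w))) *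
          ∏ w ∈ V.coeff.support, ((w : ℚ)) ^ (-(V.coeff w)) := Finset.prod_mul_distrib
    _ = (-1 : ℚ) ^ π.card * ∏ w ∈ V.coeff.support, ((w : ℚ)) ^ (-(V.coeff w)) := by rw [step2]
end

section
/- Let k be an infinite field, let D be a natural number, and let s₁, s₂, s₃ ∈ ℤ be such that the weight map α ↦ s₁α₁ + s₂α₂ + s₃α₃ is injective on the set of exponent vectors α ∈ (ℤ≥0)³ with α₁+α₂+α₃ ≤ D. For t ∈ kˣ let φ_t be the k-algebra automorphism of the polynomial ring k[x₁,x₂,x₃] determined by φ_t(x_i) = t^{s_i}·x_i (with t^{s_i} the integer power of the unit t). Let I ⊆ k[x₁,x₂,x₃] be an ideal that is generated by polynomials of total degree ≤ D and satisfies φ_t(I) ⊆ I for all t ∈ kˣ. Then I is a monomial ideal, i.e. I is generated by the monomials it contains. -/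
open MvPolynomial

section Aux
variable {k : Type*} [Field k]

/-- weight of an exponent vector -/
def wtAux (s : Fin 3 → ℤ) (α : Fin 3 →₀ ℕ) : ℤ := ∑ i, s i * (α i : ℤ)

lemma phi_monomial_aux (s : Fin 3 → ℤ) (t : kˣ) (α : Fin 3 →₀ ℕ) (c : k) :
    MvPolynomial.aeval (fun i => MvPolynomial.C (((t ^ (s i) : kˣ) : k)) * MvPolynomial.X i)
      (monomial α c) = monomial α ((t : k) ^ wtAux s α * c) := by
  rw [aeval_monomial, Finsupp.prod_fintype _ _ (fun i => pow_zero _)]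
  have : ∀ i : Fin 3, (MvPolynomial.C (((t ^ (s i) : kˣ) : k)) * MvPolynomial.X i) ^ (α i)
      = MvPolynomial.C ((t : k) ^ (s i * (α i : ℤ))) * (MvPolynomial.X i : MvPolynomial (Fin 3) k) ^ (α i) := by
    intro i
    rw [mul_pow, ← C_pow, Units.val_zpow_eq_zpow_val, ← zpow_natCast _ (α i), ← zpow_mul]
  simp_rw [this]
  rw [Finset.prod_mul_distrib, ← map_prod (MvPolynomial.C : k →+* MvPolynomial (Fin 3) k) (fun x => (t:k) ^ (s x * (α x:ℤ))) Finset.univ]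
  have hz : (t : k) ≠ 0 := Units.ne_zero t
  have hprod : (∏ i : Fin 3, (t : k) ^ (s i * (α i : ℤ))) = (t : k) ^ wtAux s α := by
    rw [wtAux, Fin.prod_univ_three, Fin.sum_univ_three, zpow_add₀ hz, zpow_add₀ hz]
  rw [hprod, monomial_eq, Finsupp.prod_fintype _ _ (fun i => pow_zero _)]
  rw [MvPolynomial.algebraMap_eq, MvPolynomial.C_mul]
  ring

lemma coeff_phi_aux (s : Fin 3 → ℤ) (t : kˣ) (p : MvPolynomial (Fin 3) k) (α : Fin 3 →₀ ℕ) :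
    coeff α (MvPolynomial.aeval
        (fun i => MvPolynomial.C (((t ^ (s i) : kˣ) : k)) * MvPolynomial.X i) p)
      = (t : k) ^ wtAux s α * coeff α p := by
  conv_lhs => rw [p.as_sum]
  rw [map_sum, MvPolynomial.coeff_sum]
  simp_rw [phi_monomial_aux, coeff_monomial]
  rw [Finset.sum_ite_eq' p.support α]
  by_cases h : α ∈ p.support
  · simp [h]
  · simp [h, MvPolynomial.notMem_support_iff.mp h]

lemma finite_bad_aux (m : ℤ) (hm : m ≠ 0) : {t : kˣ | (t : k) ^ m = 1}.Finite := by
  set n := m.natAbs with hn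
  have hn0 : 0 < n := Int.natAbs_pos.mpr hm
  have hsub : {t : kˣ | (t : k) ^ m = 1} ⊆ Units.val ⁻¹' {x : k | (Polynomial.X ^ n - Polynomial.C (1:k)).IsRoot x} := by
    intro t ht
    have hz : (t : k) ≠ 0 := Units.ne_zero t
    have h1 : (t : k) ^ (n : ℤ) = 1 := by
      rcases Int.natAbs_eq m with h | h
      · rw [← h]; exact ht
      · rw [show (n : ℤ) = -m by omega, zpow_neg, ht, inv_one]
    have h2 : (t : k) ^ n = 1 := by rwa [zpow_natCast] at h1
    simp [Polynomial.IsRoot, h2]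
  have hroot : {x : k | (Polynomial.X ^ n - Polynomial.C (1:k)).IsRoot x}.Finite :=
    Polynomial.finite_setOf_isRoot (Polynomial.X_pow_sub_C_ne_zero hn0 1)
  exact (hroot.preimage (Units.val_injective.injOn)).subset hsub

lemma infinite_units_aux [Infinite k] : Infinite kˣ := by
  have h1 : ({x : k | x ≠ 0}).Infinite := by
    have h := (Set.finite_singleton (0 : k)).infinite_compl
    have : {x : k | x ≠ 0} = ({0}ᶜ : Set k) := by ext x; simp
    rwa [this]
  have h2 : Infinite {x : k // x ≠ 0} := h1.to_subtype
  exact Infinite.of_injective _ unitsEquivNeZero.symm.injective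

end Aux

lemma key_aux {k : Type*} [Field k] [Infinite k] (D : ℕ) (s : Fin 3 → ℤ)
    (hinj : Set.InjOn (fun α : Fin 3 → ℕ => ∑ i, s i * (α i : ℤ))
      {α : Fin 3 → ℕ | ∑ i, α i ≤ D})
    (I : Ideal (MvPolynomial (Fin 3) k))
    (hstab : ∀ t : kˣ, ∀ p ∈ I,
      MvPolynomial.aeval
        (fun i => MvPolynomial.C (((t ^ (s i) : kˣ) : k)) * MvPolynomial.X i) p ∈ I) :
    ∀ n : ℕ, ∀ p : MvPolynomial (Fin 3) k, p ∈ I → p.totalDegree ≤ D →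
      p.support.card ≤ n → ∀ α ∈ p.support, monomial α (coeff α p) ∈ I := by
  intro n
  induction n with
  | zero =>
    intro p _ _ hcard α hα
    rw [Nat.le_zero, Finset.card_eq_zero] at hcard
    simp [hcard] at hα
  | succ n IH =>
    intro p hp hdeg hcard α hα
    by_cases hle : p.support.card ≤ n
    · exact IH p hp hdeg hle α hα
    have hcard' : p.support.card = n + 1 := le_antisymm hcard (not_le.mp hle)
    -- weights of distinct exponent vectors in the support are distinct
    have hwt : ∀ γ ∈ p.support, γ ≠ α → wtAux s γ ≠ wtAux s α := by
      intro γ hγ hne heq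
      apply hne
      have h1 : (∑ i, (γ i : ℕ)) ≤ D := by
        calc (∑ i, γ i) = γ.sum fun _ e => e := (Finsupp.sum_fintype γ (fun _ e => e) (fun _ => rfl)).symm
        _ ≤ p.totalDegree := MvPolynomial.le_totalDegree hγ
        _ ≤ D := hdeg
      have h2 : (∑ i, (α i : ℕ)) ≤ D := by
        calc (∑ i, α i) = α.sum fun _ e => e := (Finsupp.sum_fintype α (fun _ e => e) (fun _ => rfl)).symm
        _ ≤ p.totalDegree := MvPolynomial.le_totalDegree hα
        _ ≤ D := hdeg
      have := hinj h1 h2 heq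
      exact DFunLike.coe_injective this
    -- choose a good unit t
    have : Infinite kˣ := infinite_units_aux
    have hbadfin : (⋃ γ ∈ (↑(p.support.erase α) : Set (Fin 3 →₀ ℕ)),
        {t : kˣ | (t : k) ^ (wtAux s γ - wtAux s α) = 1}).Finite := by
      apply Set.Finite.biUnion (p.support.erase α).finite_toSet
      intro γ hγ
      have hγ' : γ ∈ p.support.erase α := Finset.mem_coe.mp hγ
      exact finite_bad_aux _ (sub_ne_zero.mpr
        (hwt γ (Finset.mem_of_mem_erase hγ') (Finset.ne_of_mem_erase hγ')))
    obtain ⟨t, ht⟩ := hbadfin.infinite_compl.nonempty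
    have hz : (t : k) ≠ 0 := t.ne_zero
    have hgood : ∀ γ ∈ p.support, γ ≠ α → (t:k) ^ wtAux s γ ≠ (t:k) ^ wtAux s α := by
      intro γ hγ hne heq
      apply ht
      refine Set.mem_biUnion (Finset.mem_coe.mpr (Finset.mem_erase.mpr ⟨hne, hγ⟩)) ?_
      show (t:k) ^ (wtAux s γ - wtAux s α) = 1
      rw [zpow_sub₀ hz, heq, div_self (zpow_ne_zero _ hz)]
    set q := (MvPolynomial.aeval
        (fun i => MvPolynomial.C (((t ^ (s i) : kˣ) : k)) * MvPolynomial.X i) p)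
      - MvPolynomial.C ((t:k) ^ wtAux s α) * p with hqdef
    have hq : q ∈ I := I.sub_mem (hstab t p hp) (I.mul_mem_left _ hp)
    have hcoeffq : ∀ γ, coeff γ q
        = ((t:k) ^ wtAux s γ - (t:k) ^ wtAux s α) * coeff γ p := by
      intro γ
      rw [hqdef, MvPolynomial.coeff_sub, coeff_phi_aux, MvPolynomial.coeff_C_mul, sub_mul]
    have hsupq : q.support ⊆ p.support.erase α := by
      intro γ hγ
      rw [MvPolynomial.mem_support_iff, hcoeffq] at hγ
      rw [Finset.mem_erase, MvPolynomial.mem_support_iff]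
      refine ⟨?_, ?_⟩
      · rintro rfl
        exact hγ (by rw [sub_self, zero_mul])
      · intro h0
        exact hγ (by rw [h0, mul_zero])
    have hdegq : q.totalDegree ≤ D := by
      refine le_trans ?_ hdeg
      exact Finset.sup_mono (hsupq.trans (Finset.erase_subset _ _))
    have hcardq : q.support.card ≤ n := by
      have := Finset.card_le_card hsupq
      rwa [Finset.card_erase_of_mem hα, hcard', Nat.add_sub_cancel] at this
    have hmono : ∀ γ ∈ p.support, γ ≠ α → monomial γ (coeff γ p) ∈ I := by
      intro γ hγ hne
      have hfac : (t:k) ^ wtAux s γ - (t:k) ^ wtAux s α ≠ 0 :=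
        sub_ne_zero.mpr (hgood γ hγ hne)
      have hγq : γ ∈ q.support := by
        rw [MvPolynomial.mem_support_iff, hcoeffq]
        exact mul_ne_zero hfac (MvPolynomial.mem_support_iff.mp hγ)
      have hmem := IH q hq hdegq hcardq γ hγq
      have heq : monomial γ (coeff γ p)
          = MvPolynomial.C (((t:k) ^ wtAux s γ - (t:k) ^ wtAux s α)⁻¹)
            * monomial γ (coeff γ q) := by
        rw [MvPolynomial.C_mul_monomial, hcoeffq, ← mul_assoc, inv_mul_cancel₀ hfac, one_mul]
      rw [heq]
      exact I.mul_mem_left _ hmem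
    have hsum : monomial α (coeff α p) + ∑ γ ∈ p.support.erase α, monomial γ (coeff γ p) = p := by
      exact (Finset.add_sum_erase _ _ hα).trans p.as_sum.symm
    have hrest : (∑ γ ∈ p.support.erase α, monomial γ (coeff γ p)) ∈ I :=
      Ideal.sum_mem I (fun γ hγ => hmono γ (Finset.mem_of_mem_erase hγ) (Finset.ne_of_mem_erase hγ))
    have hfin : monomial α (coeff α p)
        = p - ∑ γ ∈ p.support.erase α, monomial γ (coeff γ p) := by
      rw [eq_sub_iff_add_eq]; exact hsum
    rw [hfin]
    exact I.sub_mem hp hrest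

/-- over an infinite field `k`, if the weight map
`α ↦ s₁α₁+s₂α₂+s₃α₃` is injective on exponent vectors of total degree `≤ D`, then any
ideal `I ⊆ k[x₁,x₂,x₃]` generated in degrees `≤ D` and stable under all the scaling
automorphisms `φ_t : x_i ↦ t^{s_i}·x_i` (`t ∈ kˣ`) is a monomial ideal, i.e. `I` is
generated by the monomials it contains. -/
theorem torus_stable_ideal_is_monomial
    (k : Type*) [Field k] [Infinite k] (D : ℕ) (s : Fin 3 → ℤ)
    (hinj : Set.InjOn (fun α : Fin 3 → ℕ => ∑ i, s i * (α i : ℤ))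
      {α : Fin 3 → ℕ | ∑ i, α i ≤ D})
    (I : Ideal (MvPolynomial (Fin 3) k))
    (hgen : ∃ G : Set (MvPolynomial (Fin 3) k),
      (∀ g ∈ G, g.totalDegree ≤ D) ∧ I = Ideal.span G)
    (hstab : ∀ t : kˣ, ∀ p ∈ I,
      MvPolynomial.aeval
        (fun i => MvPolynomial.C (((t ^ (s i) : kˣ) : k)) * MvPolynomial.X i) p ∈ I) :
    I = Ideal.span
      {p : MvPolynomial (Fin 3) k | p ∈ I ∧ ∃ α : Fin 3 →₀ ℕ,
        p = MvPolynomial.monomial α 1} := by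
  set M : Set (MvPolynomial (Fin 3) k) :=
    {p : MvPolynomial (Fin 3) k | p ∈ I ∧ ∃ α : Fin 3 →₀ ℕ,
      p = MvPolynomial.monomial α 1} with hM
  apply le_antisymm
  · obtain ⟨G, hGdeg, hGspan⟩ := hgen
    have hGI : G ⊆ (I : Set (MvPolynomial (Fin 3) k)) := by
      rw [hGspan]; exact Ideal.subset_span
    have hG : ∀ g ∈ G, g ∈ Ideal.span M := by
      intro g hg
      have hgI : g ∈ I := hGI hg
      have hmon : ∀ α ∈ g.support, (MvPolynomial.monomial α (1:k)) ∈ I := by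
        intro α hα
        have h1 := key_aux D s hinj I hstab g.support.card g hgI (hGdeg g hg) le_rfl α hα
        have hc : MvPolynomial.coeff α g ≠ 0 := MvPolynomial.mem_support_iff.mp hα
        have : (MvPolynomial.monomial α (1:k))
            = MvPolynomial.C (MvPolynomial.coeff α g)⁻¹
              * MvPolynomial.monomial α (MvPolynomial.coeff α g) := by
          rw [MvPolynomial.C_mul_monomial, inv_mul_cancel₀ hc]
        rw [this]
        exact I.mul_mem_left _ h1
      have : g = ∑ α ∈ g.support,
          MvPolynomial.C (MvPolynomial.coeff α g) * MvPolynomial.monomial α (1:k) := by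
        conv_lhs => rw [g.as_sum]
        refine Finset.sum_congr rfl fun α _ => ?_
        rw [MvPolynomial.C_mul_monomial, mul_one]
      rw [this]
      refine Ideal.sum_mem _ fun α hα => Ideal.mul_mem_left _ _ ?_
      exact Ideal.subset_span ⟨hmon α hα, α, rfl⟩
    rw [hGspan]
    exact Ideal.span_le.mpr hG
  · exact Ideal.span_le.mpr fun p hp => hp.1
end

section
/- Let S₊ = {(a,b) ∈ ℂ × ℂ : Im(a·conj(b)) > 0} and S₋ = {(a,b) ∈ ℂ × ℂ : Im(a·conj(b)) < 0}, and let S = {(a,b) ∈ ℂ × ℂ : Im(a·conj(b)) ≠ 0}. Then S₊ and S₋ are each nonempty, open, and connected subsets of ℂ × ℂ, and S is their disjoint union; consequently S has exactly two connected components, namely S₊ and S₋. -/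
open Complex

/-- `S₊ = {(a,b) ∈ ℂ² : Im(a·conj(b)) > 0}`. -/
def Splus : Set (ℂ × ℂ) := {p | 0 < (p.1 * (starRingEnd ℂ) p.2).im}

/-- `S₋ = {(a,b) ∈ ℂ² : Im(a·conj(b)) < 0}`. -/
def Sminus : Set (ℂ × ℂ) := {p | (p.1 * (starRingEnd ℂ) p.2).im < 0}

/-- `S = {(a,b) ∈ ℂ² : Im(a·conj(b)) ≠ 0}`. -/
def Sboth : Set (ℂ × ℂ) := {p | (p.1 * (starRingEnd ℂ) p.2).im ≠ 0}

lemma continuous_quad : Continuous fun p : ℂ × ℂ => (p.1 * (starRingEnd ℂ) p.2).im :=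
  Complex.continuous_im.comp (continuous_fst.mul (Complex.continuous_conj.comp continuous_snd))

lemma compl_zero_connected : IsConnected {w : ℂ | w ≠ 0} := by
  have := isConnected_compl_singleton_of_one_lt_rank
    (E := ℂ) (rank_real_complex ▸ Nat.one_lt_ofNat) 0
  convert this using 1
  ext w
  simp

lemma quad_im (z w : ℂ) : (z * w * (starRingEnd ℂ) w).im = z.im * Complex.normSq w := by
  rw [mul_assoc, Complex.mul_conj]
  simp [Complex.mul_im]

lemma splus_eq_image :
    Splus = (fun q : ℂ × ℂ => (q.1 * q.2, q.2)) '' ({z : ℂ | 0 < z.im} ×ˢ {w : ℂ | w ≠ 0}) := by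
  ext ⟨a, b⟩
  constructor
  · intro h
    have hb : b ≠ 0 := by
      rintro rfl
      simp [Splus] at h
    refine ⟨(a / b, b), ⟨?_, hb⟩, by simp [div_mul_cancel₀ a hb]⟩
    have h0 : (0 : ℝ) < Complex.normSq b := Complex.normSq_pos.2 hb
    have := h
    simp only [Splus, Set.mem_setOf_eq] at this
    have key : (a / b * b * (starRingEnd ℂ) b).im = (a / b).im * Complex.normSq b := quad_im _ _
    rw [div_mul_cancel₀ a hb] at key
    have : 0 < (a / b).im * Complex.normSq b := key ▸ this
    show 0 < (a / b).im
    by_contra hx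
    push_neg at hx
    nlinarith
  · rintro ⟨⟨z, w⟩, ⟨hz, hw⟩, heq⟩
    obtain ⟨h1, h2⟩ := Prod.mk.injEq .. ▸ heq
    simp only [Splus, Set.mem_setOf_eq, ← h1, ← h2, quad_im]
    exact mul_pos hz (Complex.normSq_pos.2 hw)

lemma sminus_eq_image :
    Sminus = (fun q : ℂ × ℂ => (q.1 * q.2, q.2)) '' ({z : ℂ | z.im < 0} ×ˢ {w : ℂ | w ≠ 0}) := by
  ext ⟨a, b⟩
  constructor
  · intro h
    have hb : b ≠ 0 := by
      rintro rfl
      simp [Sminus] at h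
    refine ⟨(a / b, b), ⟨?_, hb⟩, by simp [div_mul_cancel₀ a hb]⟩
    have h0 : (0 : ℝ) < Complex.normSq b := Complex.normSq_pos.2 hb
    have := h
    simp only [Sminus, Set.mem_setOf_eq] at this
    have key : (a / b * b * (starRingEnd ℂ) b).im = (a / b).im * Complex.normSq b := quad_im _ _
    rw [div_mul_cancel₀ a hb] at key
    have hneg : (a / b).im * Complex.normSq b < 0 := key ▸ this
    show (a / b).im < 0
    by_contra hx
    push_neg at hx
    nlinarith
  · rintro ⟨⟨z, w⟩, ⟨hz, hw⟩, heq⟩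
    obtain ⟨h1, h2⟩ := Prod.mk.injEq .. ▸ heq
    simp only [Sminus, Set.mem_setOf_eq, ← h1, ← h2, quad_im]
    exact mul_neg_of_neg_of_pos hz (Complex.normSq_pos.2 hw)

lemma splus_connected : IsConnected Splus := by
  rw [splus_eq_image]
  apply IsConnected.image
  · exact ((convex_halfSpace_im_gt 0).isConnected ⟨Complex.I, by simp⟩).prod compl_zero_connected
  · exact ((continuous_fst.mul continuous_snd).prodMk continuous_snd).continuousOn

lemma sminus_connected : IsConnected Sminus := by
  rw [sminus_eq_image]
  apply IsConnected.image
  · exact ((convex_halfSpace_im_lt 0).isConnected ⟨-Complex.I, by simp⟩).prod compl_zero_connected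
  · exact ((continuous_fst.mul continuous_snd).prodMk continuous_snd).continuousOn

/-- `S₊` and `S₋` are nonempty, open and connected, `S` is their
disjoint union, and `S` has exactly two connected components, namely `S₊` and `S₋`. -/
theorem Splus_Sminus_components :
    Splus.Nonempty ∧ IsOpen Splus ∧ IsConnected Splus ∧
    Sminus.Nonempty ∧ IsOpen Sminus ∧ IsConnected Sminus ∧
    Sboth = Splus ∪ Sminus ∧ Disjoint Splus Sminus ∧
    ∀ p ∈ Sboth,
      connectedComponentIn Sboth p = Splus ∨ connectedComponentIn Sboth p = Sminus := by
  have hOp : IsOpen Splus := isOpen_lt continuous_const continuous_quad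
  have hOm : IsOpen Sminus := isOpen_lt continuous_quad continuous_const
  have hunion : Sboth = Splus ∪ Sminus := by
    ext p
    simp only [Sboth, Splus, Sminus, Set.mem_setOf_eq, Set.mem_union, ne_eq]
    constructor
    · intro h; rcases lt_or_gt_of_ne h with h' | h'
      · exact Or.inr h'
      · exact Or.inl h'
    · rintro (h | h) <;> [exact h.ne'; exact h.ne]
  have hdisj : Disjoint Splus Sminus := by
    rw [Set.disjoint_left]
    intro p hp hm
    simp only [Splus, Set.mem_setOf_eq] at hp
    simp only [Sminus, Set.mem_setOf_eq] at hm
    linarith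
  refine ⟨splus_connected.nonempty, hOp, splus_connected, sminus_connected.nonempty, hOm,
    sminus_connected, hunion, hdisj, ?_⟩
  intro p hp
  have hsub : connectedComponentIn Sboth p ⊆ Sboth := connectedComponentIn_subset _ _
  have hconn : IsPreconnected (connectedComponentIn Sboth p) :=
    (isPreconnected_connectedComponentIn)
  have hmem : p ∈ connectedComponentIn Sboth p := mem_connectedComponentIn hp
  rw [hunion] at hp
  rcases hp with hp | hp
  · left
    have hsubp : connectedComponentIn Sboth p ⊆ Splus :=
      hconn.subset_left_of_subset_union hOp hOm hdisj (hunion ▸ hsub) ⟨p, hmem, hp⟩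
    refine subset_antisymm hsubp ?_
    exact splus_connected.isPreconnected.subset_connectedComponentIn hp
      (hunion ▸ Set.subset_union_left)
  · right
    have hsubp : connectedComponentIn Sboth p ⊆ Sminus :=
      hconn.subset_right_of_subset_union hOp hOm hdisj (hunion ▸ hsub) ⟨p, hmem, hp⟩
    refine subset_antisymm hsubp ?_
    exact sminus_connected.isPreconnected.subset_connectedComponentIn hp
      (hunion ▸ Set.subset_union_right)
end

section
/- Let a, b, c, d ∈ ℂ with ad − bc = 1. Then the following are equivalent: (i) there exists t ∈ ℂ with t ≠ 0 such that c = t·conj(a), d = t·conj(b), −a = t⁻¹·conj(c), and −b = t⁻¹·conj(d) (i.e. the matrix g = [[a,b],[c,d]] satisfies σ·g = diag(t,t⁻¹)·ḡ, where σ = [[0,1],[−1,0]] and ḡ is the entrywise complex conjugate of g); (ii) Im(a·conj(b)) ≠ 0, c = conj(a)/(2i·Im(a·conj(b))), and d = conj(b)/(2i·Im(a·conj(b))). Moreover, when these hold, the element t in (i) is unique, equal to 1/(2i·Im(a·conj(b))), and is purely imaginary. -/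
open Complex

/-- for `a, b, c, d ∈ ℂ` with `ad − bc = 1`, the existence of a nonzero
`t ∈ ℂ` with `c = t·conj a`, `d = t·conj b`, `−a = t⁻¹·conj c`, `−b = t⁻¹·conj d`
(i.e. `σ·g = diag(t,t⁻¹)·ḡ` for `g = [[a,b],[c,d]]`) is equivalent to
`Im(a·conj b) ≠ 0`, `c = conj a/(2i·Im(a·conj b))` and `d = conj b/(2i·Im(a·conj b))`;
moreover such a `t` is unique, equal to `1/(2i·Im(a·conj b))`, and purely imaginary. -/
theorem sl2_minus_parametrization (a b c d : ℂ) (h : a * d - b * c = 1) :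
    ((∃ t : ℂ, t ≠ 0 ∧ c = t * (starRingEnd ℂ) a ∧ d = t * (starRingEnd ℂ) b ∧
        -a = t⁻¹ * (starRingEnd ℂ) c ∧ -b = t⁻¹ * (starRingEnd ℂ) d) ↔
      ((a * (starRingEnd ℂ) b).im ≠ 0 ∧
        c = (starRingEnd ℂ) a / (2 * I * ((a * (starRingEnd ℂ) b).im : ℂ)) ∧
        d = (starRingEnd ℂ) b / (2 * I * ((a * (starRingEnd ℂ) b).im : ℂ)))) ∧
    (∀ t : ℂ, t ≠ 0 → c = t * (starRingEnd ℂ) a → d = t * (starRingEnd ℂ) b →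
      -a = t⁻¹ * (starRingEnd ℂ) c → -b = t⁻¹ * (starRingEnd ℂ) d →
      t = 1 / (2 * I * ((a * (starRingEnd ℂ) b).im : ℂ)) ∧ t.re = 0) := by
  set r : ℝ := (a * (starRingEnd ℂ) b).im with hr
  have hconj : a * (starRingEnd ℂ) b - (starRingEnd ℂ) (a * (starRingEnd ℂ) b)
      = 2 * (r : ℂ) * I := by rw [Complex.sub_conj]; push_cast; ring
  have key : ∀ t : ℂ, c = t * (starRingEnd ℂ) a → d = t * (starRingEnd ℂ) b →
      t * (2 * I * (r : ℂ)) = 1 := by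
    intro t hc hd
    have h' : a * (t * (starRingEnd ℂ) b) - b * (t * (starRingEnd ℂ) a) = 1 := by
      rw [← hc, ← hd]; exact h
    calc t * (2 * I * (r : ℂ))
        = t * (a * (starRingEnd ℂ) b - (starRingEnd ℂ) (a * (starRingEnd ℂ) b)) := by
          rw [hconj]; ring
      _ = a * (t * (starRingEnd ℂ) b) - b * (t * (starRingEnd ℂ) a) := by
          simp [map_mul]; ring
      _ = 1 := h'
  have hr_of : ∀ t : ℂ, t * (2 * I * (r : ℂ)) = 1 → r ≠ 0 := by
    intro t ht hr0
    rw [hr0] at ht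
    simp at ht
  have teq : ∀ t : ℂ, t * (2 * I * (r : ℂ)) = 1 → t = 1 / (2 * I * (r : ℂ)) :=
    fun t ht => eq_one_div_of_mul_eq_one_right ((mul_comm _ t).trans ht)
  have tre : ∀ t : ℂ, t * (2 * I * (r : ℂ)) = 1 → t.re = 0 := by
    intro t ht
    have hrne := hr_of t ht
    rw [teq t ht]
    simp [Complex.div_re]
  constructor
  · constructor
    · rintro ⟨t, ht0, hc, hd, _, _⟩
      have k := key t hc hd
      refine ⟨hr_of t k, ?_, ?_⟩
      · rw [hc, teq t k]; ring
      · rw [hd, teq t k]; ring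
    · rintro ⟨hrne, hc, hd⟩
      have hrc : (r : ℂ) ≠ 0 := ofReal_ne_zero.mpr hrne
      have hI : I ≠ 0 := I_ne_zero
      have hden : (2 * I * (r : ℂ)) ≠ 0 := by simp [hI, hrc]
      refine ⟨(2 * I * (r : ℂ))⁻¹, inv_ne_zero hden, ?_, ?_, ?_, ?_⟩
      · rw [hc]; field_simp
      · rw [hd]; field_simp
      · rw [hc]
        simp only [map_div₀, map_mul, Complex.conj_I, Complex.conj_ofReal, map_ofNat,
          Complex.conj_conj]
        field_simp
      · rw [hd]
        simp only [map_div₀, map_mul, Complex.conj_I, Complex.conj_ofReal, map_ofNat,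
          Complex.conj_conj]
        field_simp
  · intro t ht0 hc hd _ _
    have k := key t hc hd
    exact ⟨teq t k, tre t k⟩
end
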